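/- arXiv:math/9807086 — 2 statements merged into one kernel-verified Lean document; each statement's English description precedes it below -/
import Mathlib

section
/- Let H : ℝ³ → ℝ be smooth (coordinates (φ,p⁰,p¹)) and let a vector field ξ = (ξ_φ, ξ_{p⁰}, ξ_{p¹}) on ℝ³ satisfy dH · ξ = 0 everywhere. Suppose ξ admits momentum functions P⁰, P¹ : ℝ³ → ℝ with dP⁰ = ξ ⌟ ω⁰ and dP¹ = ξ ⌟ ω¹, where ω⁰ = dφ ∧ dp⁰ and ω¹ = dφ ∧ dp¹. Then along any solution z : ℝ² → ℝ³ of M ∂z/∂x⁰ + K ∂z/∂x¹ = -∇H(z) (with M,K as in Bridges' formulation), one has ∂(P⁰∘z)/∂x⁰ + ∂(P¹∘z)/∂x¹ = 0. -/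
open scoped BigOperators

lemma basis_decomp (v : Fin 3 → ℝ) :
    v = v 0 • ![(1:ℝ),0,0] + v 1 • ![(0:ℝ),1,0] + v 2 • ![(0:ℝ),0,1] := by
  funext i
  fin_cases i <;> simp

/-- Bridges' Noether theorem on ℝ³ (coordinates (φ,p⁰,p¹) indexed 0,1,2):
if dH·ξ = 0 and ξ admits momentum functions P⁰, P¹ with dP⁰ = ξ ⌟ ω⁰,
dP¹ = ξ ⌟ ω¹ (ω⁰ = dφ∧dp⁰, ω¹ = dφ∧dp¹), then along any solution of
M ∂z/∂x⁰ + K ∂z/∂x¹ = -∇H(z), ∂(P⁰∘z)/∂x⁰ + ∂(P¹∘z)/∂x¹ = 0. -/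
theorem stmt1 (H P0 P1 : (Fin 3 → ℝ) → ℝ) (ξ : (Fin 3 → ℝ) → (Fin 3 → ℝ))
    (hH : ContDiff ℝ (⊤ : ℕ∞) H) (hP0 : ContDiff ℝ (⊤ : ℕ∞) P0)
    (hP1 : ContDiff ℝ (⊤ : ℕ∞) P1) (hξ : ContDiff ℝ (⊤ : ℕ∞) ξ)
    (hsym : ∀ y, fderiv ℝ H y (ξ y) = 0)
    (hmom0 : ∀ y v, fderiv ℝ P0 y v = ξ y 0 * v 1 - ξ y 1 * v 0)
    (hmom1 : ∀ y v, fderiv ℝ P1 y v = ξ y 0 * v 2 - ξ y 2 * v 0)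
    (z : (Fin 2 → ℝ) → (Fin 3 → ℝ)) (hz : ContDiff ℝ (⊤ : ℕ∞) z)
    (hsol : ∀ x,
        (-(fderiv ℝ z x ![1,0] 1) - fderiv ℝ z x ![0,1] 2
            = -(fderiv ℝ H (z x) ![1,0,0]))
      ∧ (fderiv ℝ z x ![1,0] 0 = -(fderiv ℝ H (z x) ![0,1,0]))
      ∧ (fderiv ℝ z x ![0,1] 0 = -(fderiv ℝ H (z x) ![0,0,1]))) :
    ∀ x, fderiv ℝ (P0 ∘ z) x ![1,0] + fderiv ℝ (P1 ∘ z) x ![0,1] = 0 := by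
  intro x
  have hzd : DifferentiableAt ℝ z x := (hz.differentiable (by simp)) x
  have h0 : fderiv ℝ (P0 ∘ z) x = (fderiv ℝ P0 (z x)).comp (fderiv ℝ z x) :=
    fderiv_comp x ((hP0.differentiable (by simp)) (z x)) hzd
  have h1 : fderiv ℝ (P1 ∘ z) x = (fderiv ℝ P1 (z x)).comp (fderiv ℝ z x) :=
    fderiv_comp x ((hP1.differentiable (by simp)) (z x)) hzd
  have hHlin : fderiv ℝ H (z x) (ξ (z x)) =
      ξ (z x) 0 * fderiv ℝ H (z x) ![1,0,0] + ξ (z x) 1 * fderiv ℝ H (z x) ![0,1,0]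
        + ξ (z x) 2 * fderiv ℝ H (z x) ![0,0,1] := by
    conv_lhs => rw [basis_decomp (ξ (z x))]
    rw [map_add, map_add, map_smul, map_smul, map_smul]
    simp [smul_eq_mul]
  obtain ⟨e1, e2, e3⟩ := hsol x
  have hs := hsym (z x)
  rw [h0, h1]
  simp only [ContinuousLinearMap.comp_apply, hmom0, hmom1]
  rw [hHlin] at hs
  have h10 : fderiv ℝ z x ![1,0] 1 + fderiv ℝ z x ![0,1] 2 = fderiv ℝ H (z x) ![1,0,0] := by
    linarith
  linear_combination ξ (z x) 0 * h10 - ξ (z x) 1 * e2 - ξ (z x) 2 * e3 + hs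
end

section
/- Generalization to n+1 spacetime dimensions: let H : ℝ^{n+2} → ℝ be smooth with coordinates (φ, p⁰, …, pⁿ), let ξ be a vector field on ℝ^{n+2} with dH · ξ = 0, and suppose for each μ = 0,…,n there exists a smooth Pᵘ : ℝ^{n+2} → ℝ with dPᵘ = ξ ⌟ ωᵘ, where ωᵘ = dφ ∧ dpᵘ. Then for any solution z : ℝ^{n+1} → ℝ^{n+2} of the multihamiltonian system ∑_μ ωᵘ(∂z/∂xᵘ, ·) = -dH(z), the divergence ∑_μ ∂(Pᵘ∘z)/∂xᵘ vanishes identically. -/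
open scoped BigOperators

/-- Bridges' Noether theorem in n+1 spacetime dimensions: coordinates on ℝ^{n+2}
are (φ, p⁰, …, pⁿ) with φ indexed by 0 and pᵘ by μ.succ; ωᵘ = dφ ∧ dpᵘ, so
(ξ ⌟ ωᵘ)(v) = ξ₀ v_{μ.succ} - ξ_{μ.succ} v₀.  If dH·ξ = 0 and dPᵘ = ξ ⌟ ωᵘ, then
along any solution z of the multihamiltonian system ∑_μ ωᵘ(∂z/∂xᵘ, ·) = -dH(z),
the divergence ∑_μ ∂(Pᵘ∘z)/∂xᵘ vanishes identically. -/
theorem stmt2 (n : ℕ) (H : (Fin (n+2) → ℝ) → ℝ) (hH : ContDiff ℝ (⊤ : ℕ∞) H)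
    (ξ : (Fin (n+2) → ℝ) → (Fin (n+2) → ℝ)) (hξ : ContDiff ℝ (⊤ : ℕ∞) ξ)
    (P : Fin (n+1) → (Fin (n+2) → ℝ) → ℝ) (hP : ∀ μ, ContDiff ℝ (⊤ : ℕ∞) (P μ))
    (hsym : ∀ y, fderiv ℝ H y (ξ y) = 0)
    (hmom : ∀ (μ : Fin (n+1)) (y : Fin (n+2) → ℝ) (v : Fin (n+2) → ℝ),
      fderiv ℝ (P μ) y v = ξ y 0 * v μ.succ - ξ y μ.succ * v 0)
    (z : (Fin (n+1) → ℝ) → (Fin (n+2) → ℝ)) (hz : ContDiff ℝ (⊤ : ℕ∞) z)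
    (hsol : ∀ (x : Fin (n+1) → ℝ) (U : Fin (n+2) → ℝ),
      ∑ μ : Fin (n+1),
        (fderiv ℝ z x (Pi.single μ 1) 0 * U μ.succ
          - fderiv ℝ z x (Pi.single μ 1) μ.succ * U 0)
        = -(fderiv ℝ H (z x) U)) :
    ∀ x, ∑ μ : Fin (n+1), fderiv ℝ (P μ ∘ z) x (Pi.single μ 1) = 0 := by
  intro x
  have hzd : DifferentiableAt ℝ z x := (hz.differentiable (by norm_num)).differentiableAt
  have key : ∀ μ : Fin (n+1), fderiv ℝ (P μ ∘ z) x (Pi.single μ 1)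
      = ξ (z x) 0 * fderiv ℝ z x (Pi.single μ 1) μ.succ
        - ξ (z x) μ.succ * fderiv ℝ z x (Pi.single μ 1) 0 := by
    intro μ
    rw [fderiv_comp x ((hP μ).differentiable (by norm_num)).differentiableAt hzd]
    simp [hmom]
  simp only [key]
  have h2 := hsol x (ξ (z x))
  rw [hsym, neg_zero] at h2
  have h3 : (∑ μ : Fin (n+1),
      (ξ (z x) 0 * fderiv ℝ z x (Pi.single μ 1) μ.succ
        - ξ (z x) μ.succ * fderiv ℝ z x (Pi.single μ 1) 0))
      = -∑ μ : Fin (n+1),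
      (fderiv ℝ z x (Pi.single μ 1) 0 * ξ (z x) μ.succ
        - fderiv ℝ z x (Pi.single μ 1) μ.succ * ξ (z x) 0) := by
    rw [← Finset.sum_neg_distrib]
    exact Finset.sum_congr rfl fun μ _ => by ring
  rw [h3, h2, neg_zero]
end
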